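/- Let C \subseteq \mathbb{H}(n,q) be a \tau-design of cardinality M and h:[-1,1)\to(0,\infty). Suppose g(t) = \sum_{i=0}^n g_i Q_i^{(n,q)}(t) is a real polynomial with g(t) \ge h(t) for all inner products t \in T_n occurring between distinct points of C, and g_i \le 0 for all i \ge \tau+1. Then E(n,C;h) \le g_0 M - g(1). -/

import Mathlib

/-- Generalized binomial coefficient `C(x, j)` as a polynomial expression in a real `x`. -/
noncomputable def binomPoly (x : ℝ) (j : ℕ) : ℝ :=
  (∏ m ∈ Finset.range j, (x - (m : ℝ))) / (Nat.factorial j : ℝ)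

/-- Krawtchouk polynomial `K_i^{(n,q)}(z)`. -/
noncomputable def kraw (n q i : ℕ) (z : ℝ) : ℝ :=
  ∑ j ∈ Finset.range (i + 1),
    (-1 : ℝ) ^ j * ((q : ℝ) - 1) ^ (i - j) * binomPoly z j * binomPoly ((n : ℝ) - z) (i - j)

/-- Normalized Krawtchouk polynomial `Q_i^{(n,q)}(t)`. -/
noncomputable def Qnorm (n q i : ℕ) (t : ℝ) : ℝ :=
  kraw n q i ((n : ℝ) * (1 - t) / 2) / (((q : ℝ) - 1) ^ i * (n.choose i : ℝ))

/-- Hamming distance between two words of `ℍ(n,q)`. -/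
def hammingDist' {n q : ℕ} (x y : Fin n → Fin q) : ℕ :=
  (Finset.univ.filter fun i => x i ≠ y i).card

/-- "Inner product" `⟨x,y⟩ = 1 - 2 d(x,y)/n`. -/
noncomputable def innerProd {n q : ℕ} (x y : Fin n → Fin q) : ℝ :=
  1 - 2 * (hammingDist' x y : ℝ) / (n : ℝ)

lemma Qnorm_zero (n q : ℕ) (t : ℝ) : Qnorm n q 0 t = 1 := by
  simp [Qnorm, kraw, binomPoly]

lemma innerProd_self {n q : ℕ} (x : Fin n → Fin q) : innerProd x x = 1 := by
  simp [innerProd, hammingDist']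

theorem stmt_5 (n q τ : ℕ) (hn : 1 ≤ n) (hq : 2 ≤ q)
    (C : Finset (Fin n → Fin q)) (M : ℕ) (hM : C.card = M) (hM1 : 1 ≤ M)
    -- `C` is a `τ`-design:
    (hdes : ∀ i : ℕ, 1 ≤ i → i ≤ τ →
      ∑ x ∈ C, ∑ y ∈ C, Qnorm n q i (innerProd x y) = 0)
    -- positive definiteness of the Krawtchouk kernels:
    (hpd : ∀ i : ℕ, τ + 1 ≤ i → i ≤ n →
      0 ≤ ∑ x ∈ C, ∑ y ∈ C, Qnorm n q i (innerProd x y))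
    (h : ℝ → ℝ) (hpos : ∀ t ∈ Set.Ico (-1 : ℝ) 1, 0 < h t)
    (c : ℕ → ℝ) (g : ℝ → ℝ)
    (hg : ∀ t : ℝ, g t = ∑ i ∈ Finset.range (n + 1), c i * Qnorm n q i t)
    (hgh : ∀ x ∈ C, ∀ y ∈ C, x ≠ y → h (innerProd x y) ≤ g (innerProd x y))
    (hcoef : ∀ i : ℕ, τ + 1 ≤ i → c i ≤ 0) :
    (1 / (M : ℝ)) * ∑ x ∈ C, ∑ y ∈ C \ {x}, h (innerProd x y) ≤
      c 0 * (M : ℝ) - g 1 := by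
  have hMpos : (0 : ℝ) < M := by exact_mod_cast hM1
  set S : ℕ → ℝ := fun i => ∑ x ∈ C, ∑ y ∈ C, Qnorm n q i (innerProd x y) with hS
  -- total sum of g over all pairs equals ∑ c i * S i
  have hsum : ∑ x ∈ C, ∑ y ∈ C, g (innerProd x y)
      = ∑ i ∈ Finset.range (n + 1), c i * S i := by
    simp_rw [hg, hS, Finset.mul_sum]
    calc ∑ x ∈ C, ∑ y ∈ C, ∑ i ∈ Finset.range (n+1), c i * Qnorm n q i (innerProd x y)
        = ∑ x ∈ C, ∑ i ∈ Finset.range (n+1), ∑ y ∈ C, c i * Qnorm n q i (innerProd x y) :=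
          Finset.sum_congr rfl fun x _ => Finset.sum_comm
      _ = ∑ i ∈ Finset.range (n+1), ∑ x ∈ C, ∑ y ∈ C, c i * Qnorm n q i (innerProd x y) :=
          Finset.sum_comm
  have hS0 : S 0 = (M : ℝ) * M := by
    simp [hS, Qnorm_zero, Finset.sum_const, hM, mul_comm]
  have hbound : ∑ i ∈ Finset.range (n + 1), c i * S i ≤ c 0 * ((M : ℝ) * M) := by
    rw [Finset.sum_range_succ']
    have hrest : ∑ i ∈ Finset.range n, c (i + 1) * S (i + 1) ≤ 0 := by
      apply Finset.sum_nonpos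
      intro i hi
      by_cases hiτ : i + 1 ≤ τ
      · rw [show S (i + 1) = 0 from hdes (i + 1) (Nat.le_add_left 1 i) hiτ]
        simp
      · push_neg at hiτ
        exact mul_nonpos_of_nonpos_of_nonneg (hcoef _ hiτ)
          (hpd _ hiτ (Nat.succ_le_of_lt (Finset.mem_range.mp hi)))
    rw [hS0]
    linarith
  -- split off the diagonal
  have hdiag : ∑ x ∈ C, ∑ y ∈ C, g (innerProd x y)
      = ∑ x ∈ C, ∑ y ∈ C \ {x}, g (innerProd x y) + (M : ℝ) * g 1 := by
    have : ∀ x ∈ C, ∑ y ∈ C, g (innerProd x y)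
        = ∑ y ∈ C \ {x}, g (innerProd x y) + g 1 := by
      intro x hx
      rw [Finset.sum_eq_sum_sdiff_singleton_add hx (fun y => g (innerProd x y)),
        innerProd_self]
    rw [Finset.sum_congr rfl this, Finset.sum_add_distrib]
    simp [hM]
  have hh : ∑ x ∈ C, ∑ y ∈ C \ {x}, h (innerProd x y)
      ≤ ∑ x ∈ C, ∑ y ∈ C \ {x}, g (innerProd x y) := by
    apply Finset.sum_le_sum
    intro x hx
    apply Finset.sum_le_sum
    intro y hy
    rw [Finset.mem_sdiff, Finset.mem_singleton] at hy
    exact hgh x hx y hy.1 (fun e => hy.2 e.symm)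
  have key : ∑ x ∈ C, ∑ y ∈ C \ {x}, h (innerProd x y)
      ≤ (M : ℝ) * (c 0 * (M : ℝ) - g 1) := by
    nlinarith [hsum, hbound, hdiag, hh]
  rw [one_div, inv_mul_le_iff₀ hMpos]
  exact key
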